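/- Let μ, ν be finite measures on ℝ with finite first moments and μ ≤_E ν, with μ(ℝ) < ν(ℝ). Define β = (ν(ℝ)-μ(ℝ)) δ_{(\bar{ν}-\bar{μ})/(ν(ℝ)-μ(ℝ))}. Then β ≤_cx ν - μ. In particular, P_ν(k) - P_μ(k) ≥ ((ν(ℝ)-μ(ℝ))k - (\bar{ν}-\bar{μ}))^+ for all k. -/

import Mathlib

open MeasureTheory Set Filter

noncomputable def pot (eta : Measure ℝ) (k : ℝ) : ℝ := ∫ x, max (k - x) 0 ∂eta

noncomputable def cpot (eta : Measure ℝ) (k : ℝ) : ℝ := ∫ x, max (x - k) 0 ∂eta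

/-- `c` is the convex hull (largest convex minorant) of `f`. -/
def IsConvexHull (f c : ℝ → ℝ) : Prop :=
  ConvexOn ℝ Set.univ c ∧ (∀ x, c x ≤ f x) ∧
    ∀ g : ℝ → ℝ, ConvexOn ℝ Set.univ g → (∀ x, g x ≤ f x) → ∀ x, g x ≤ c x

/-- Convex order: `∫ f dη ≤ ∫ f dχ` for all convex `f` for which both integrals exist. -/
def Cx (eta chi : Measure ℝ) : Prop :=
  ∀ f : ℝ → ℝ, ConvexOn ℝ Set.univ f → Integrable f eta → Integrable f chi →
    ∫ x, f x ∂eta ≤ ∫ x, f x ∂chi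

/-- Extended convex order: `∫ f dη ≤ ∫ f dχ` for all nonnegative convex `f`. -/
def ECx (eta chi : Measure ℝ) : Prop :=
  ∀ f : ℝ → ℝ, ConvexOn ℝ Set.univ f → (∀ x, 0 ≤ f x) →
    ∫⁻ x, ENNReal.ofReal (f x) ∂eta ≤ ∫⁻ x, ENNReal.ofReal (f x) ∂chi

/-- The class `𝒟(a, b)`: nonnegative, nondecreasing, convex functions vanishing at `-∞`
and asymptotic to `a * z - b` at `+∞`. -/
def MemD (a b : ℝ) (f : ℝ → ℝ) : Prop :=
  ConvexOn ℝ Set.univ f ∧ Monotone f ∧ (∀ x, 0 ≤ f x) ∧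
    Tendsto f atBot (nhds 0) ∧
    Tendsto (fun z => f z - (a * z - b)) atTop (nhds 0)

/-- `S` is the shadow of `μ` in `ν`. -/
def IsShadow (mu nu S : Measure ℝ) : Prop :=
  Cx mu S ∧ S ≤ nu ∧ ∀ eta : Measure ℝ, Cx mu eta → eta ≤ nu → Cx S eta

/-- `T` is the counter-shadow of `μ` in `ν`. -/
def IsCounterShadow (mu nu T : Measure ℝ) : Prop :=
  Cx mu T ∧ T ≤ nu ∧ ∀ eta : Measure ℝ, Cx mu eta → eta ≤ nu → Cx eta T


lemma affine_eq (a b x y p q : ℝ) (hpq : p + q = 1) :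
    a * (p * x + q * y) + b = p * (a * x + b) + q * (a * y + b) := by
  linear_combination (-b) * hpq

lemma affine_convexOn (a b : ℝ) : ConvexOn ℝ Set.univ (fun x : ℝ => a * x + b) := by
  refine ⟨convex_univ, fun x _ y _ p q hp hq hpq => ?_⟩
  simp only [smul_eq_mul]
  exact le_of_eq (affine_eq a b x y p q hpq)

lemma affine_concaveOn (a b : ℝ) : ConcaveOn ℝ Set.univ (fun x : ℝ => a * x + b) := by
  refine ⟨convex_univ, fun x _ y _ p q hp hq hpq => ?_⟩
  simp only [smul_eq_mul]
  exact ge_of_eq (affine_eq a b x y p q hpq)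

lemma exists_support {f : ℝ → ℝ} (hf : ConvexOn ℝ Set.univ f) (m : ℝ) :
    ∃ s : ℝ, ∀ x, f m + s * (x - m) ≤ f x := by
  set g : ℝ → ℝ := fun y => (f y - f m) / (y - m) with hg
  have mono : ∀ x y : ℝ, x ≤ y → x ≠ m → y ≠ m → g x ≤ g y := fun x y hxy hx hy =>
    hf.secant_mono (Set.mem_univ m) (Set.mem_univ x) (Set.mem_univ y) hx hy hxy
  have hbdd : BddAbove (g '' Set.Iio m) := by
    refine ⟨g (m + 1), fun z hz => ?_⟩
    obtain ⟨y, hy, rfl⟩ := hz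
    exact mono y (m + 1) (by linarith [hy.out]) (ne_of_lt hy.out) (by linarith)
  have hne : (g '' Set.Iio m).Nonempty := ⟨g (m - 1), ⟨m - 1, by simp, rfl⟩⟩
  refine ⟨sSup (g '' Set.Iio m), fun x => ?_⟩
  rcases lt_trichotomy x m with hx | hx | hx
  · have h1 : g x ≤ sSup (g '' Set.Iio m) := le_csSup hbdd ⟨x, hx, rfl⟩
    rw [hg] at h1
    rw [div_le_iff_of_neg (by linarith : x - m < 0)] at h1
    linarith
  · subst hx; simp
  · have h1 : sSup (g '' Set.Iio m) ≤ g x := by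
      refine csSup_le hne fun z hz => ?_
      obtain ⟨y, hy, rfl⟩ := hz
      exact mono y x (by linarith [hy.out]) (ne_of_lt hy.out) (ne_of_gt hx)
    rw [hg] at h1
    rw [le_div_iff₀ (by linarith : (0:ℝ) < x - m)] at h1
    linarith


theorem stmt11 (mu nu : Measure ℝ) [IsFiniteMeasure mu] [IsFiniteMeasure nu]
    (hintm : Integrable (fun x => x) mu) (hintn : Integrable (fun x => x) nu)
    (hE : ECx mu nu) (hmass : mu Set.univ < nu Set.univ) :
    (∀ f : ℝ → ℝ, ConvexOn ℝ Set.univ f → Integrable f mu → Integrable f nu →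
      ((nu Set.univ).toReal - (mu Set.univ).toReal) *
          f ((∫ x, x ∂nu - ∫ x, x ∂mu) / ((nu Set.univ).toReal - (mu Set.univ).toReal))
        + ∫ x, f x ∂mu ≤ ∫ x, f x ∂nu) ∧
    (∀ k : ℝ,
      max (((nu Set.univ).toReal - (mu Set.univ).toReal) * k - (∫ x, x ∂nu - ∫ x, x ∂mu)) 0
        ≤ pot nu k - pot mu k) := by
  set M : ℝ := (mu Set.univ).toReal with hM
  set N : ℝ := (nu Set.univ).toReal with hN
  have hΔ : 0 < N - M := by
    have : M < N := ENNReal.toReal_lt_toReal (measure_ne_top mu _) (measure_ne_top nu _)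
      |>.mpr hmass
    linarith
  set D : ℝ := ∫ x, x ∂nu - ∫ x, x ∂mu with hD
  set m : ℝ := D / (N - M) with hm
  have hmΔ : m * (N - M) = D := div_mul_cancel₀ D (ne_of_gt hΔ)
  have main : ∀ f : ℝ → ℝ, ConvexOn ℝ Set.univ f → Integrable f mu → Integrable f nu →
      (N - M) * f m + ∫ x, f x ∂mu ≤ ∫ x, f x ∂nu := by
    intro f hconv hfm hfn
    obtain ⟨s, hs⟩ := exists_support hconv m
    set l : ℝ → ℝ := fun x => s * x + (f m - s * m) with hl
    have hlf : ∀ x, l x ≤ f x := fun x => by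
      have := hs x; simp only [hl]; linarith
    have hgconv : ConvexOn ℝ Set.univ (fun x => f x - l x) :=
      hconv.sub (affine_concaveOn s (f m - s * m))
    have hgnn : ∀ x, 0 ≤ f x - l x := fun x => by linarith [hlf x]
    have hlim : Integrable l mu :=
      (hintm.const_mul s).add (integrable_const _)
    have hlin : Integrable l nu :=
      (hintn.const_mul s).add (integrable_const _)
    have hgm : Integrable (fun x => f x - l x) mu := hfm.sub hlim
    have hgn : Integrable (fun x => f x - l x) nu := hfn.sub hlin
    have hlint : ∀ (eta : Measure ℝ) [IsFiniteMeasure eta], Integrable (fun x : ℝ => x) eta →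
        ∫ x, l x ∂eta = s * ∫ x, x ∂eta + (eta Set.univ).toReal * (f m - s * m) := by
      intro eta _ hint
      rw [hl]
      rw [integral_add (hint.const_mul s) (integrable_const _), integral_const_mul,
        integral_const]
      simp [smul_eq_mul, Measure.real]
    have key : ∫ x, f x - l x ∂mu ≤ ∫ x, f x - l x ∂nu := by
      have h := hE (fun x => f x - l x) hgconv hgnn
      rw [← ofReal_integral_eq_lintegral_ofReal hgm (Filter.Eventually.of_forall hgnn),
        ← ofReal_integral_eq_lintegral_ofReal hgn (Filter.Eventually.of_forall hgnn)] at h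
      exact (ENNReal.ofReal_le_ofReal_iff (integral_nonneg hgnn)).mp h
    rw [integral_sub hfm hlim, integral_sub hfn hlin, hlint mu hintm, hlint nu hintn] at key
    rw [← hM, ← hN] at key
    have h2 : s * ∫ x, x ∂nu + N * (f m - s * m) - (s * ∫ x, x ∂mu + M * (f m - s * m))
        = (N - M) * f m := by
      have e1 : s * ∫ x, x ∂nu + N * (f m - s * m) - (s * ∫ x, x ∂mu + M * (f m - s * m))
          = s * D + (N - M) * f m - s * (m * (N - M)) := by rw [hD]; ring
      rw [e1, hmΔ]; ring
    linarith [key, h2]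
  refine ⟨main, fun k => ?_⟩
  have hconvf : ConvexOn ℝ Set.univ (fun x => max (k - x) 0) := by
    refine ⟨convex_univ, fun x _ y _ p q hp hq hpq => ?_⟩
    simp only [smul_eq_mul]
    have hk : p * k + q * k = k := by rw [← add_mul, hpq, one_mul]
    apply max_le
    · have h1 := mul_le_mul_of_nonneg_left (le_max_left (k - x) 0) hp
      have h2 := mul_le_mul_of_nonneg_left (le_max_left (k - y) 0) hq
      nlinarith [h1, h2, hk]
    · exact add_nonneg (mul_nonneg hp (le_max_right _ _)) (mul_nonneg hq (le_max_right _ _))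
  have hintfm : Integrable (fun x => max (k - x) 0) mu :=
    ((integrable_const k).sub hintm).pos_part
  have hintfn : Integrable (fun x => max (k - x) 0) nu :=
    ((integrable_const k).sub hintn).pos_part
  have h := main _ hconvf hintfm hintfn
  have hrw : (N - M) * max (k - m) 0 = max ((N - M) * k - D) 0 := by
    rw [mul_max_of_nonneg _ _ (le_of_lt hΔ), mul_zero]
    congr 1
    rw [mul_sub]
    linarith [hmΔ]
  have hpotn : pot nu k = ∫ x, max (k - x) 0 ∂nu := rfl
  have hpotm : pot mu k = ∫ x, max (k - x) 0 ∂mu := rfl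
  rw [hpotn, hpotm]
  linarith [h, hrw.symm.le, hrw.le]
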